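/- Let C₀>0, τ>0 and 0<μ<μ_τ, and let u ∈ ℰ_{τ,μ}(C₀). Then the function x ↦ V(x;u) is differentiable on ℝ and its derivative satisfies |∂ₓV(x;u)| ≤ (1/√(1+τμc_μ−μ²) + μ/(1+τμc_μ−μ²))·e^{−μx} for every x∈ℝ. -/

import Mathlib

open Real Filter MeasureTheory Set Topology

/-- `c_μ = μ + a/μ`. -/
noncomputable def cmu (a μ : ℝ) : ℝ := μ + a / μ

/-- `μ_τ = √a` if `τ ≥ 1`, and `min{√a, √((1+τa)/(1−τ))}` if `0 < τ < 1`. -/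
noncomputable def muTau (a τ : ℝ) : ℝ :=
  if 1 ≤ τ then Real.sqrt a else min (Real.sqrt a) (Real.sqrt ((1 + τ * a) / (1 - τ)))

/-- Condition (H) on `(τ, μ, χ)`. -/
noncomputable def condH (a b τ μ χ : ℝ) : Prop :=
  1 + τ * cmu a μ < (b - χ) / χ ∧
  (μ + τ * cmu a μ) / Real.sqrt (1 + τ * μ * cmu a μ - μ ^ 2)
      + μ * (μ + τ * cmu a μ) / (1 + τ * μ * cmu a μ - μ ^ 2) ≤ (b - χ) / χ

/-- `V(x;u) = ∫₀^∞ ∫_ℝ (e^{−s}/√(4πs)) e^{−(x−z)²/(4s)} u(z+τcs) dz ds`. -/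
noncomputable def Vfun (τ c : ℝ) (u : ℝ → ℝ) (x : ℝ) : ℝ :=
  ∫ s in Set.Ioi (0:ℝ), ∫ z : ℝ,
    (Real.exp (-s) / Real.sqrt (4 * Real.pi * s)) * Real.exp (-(x - z) ^ 2 / (4 * s))
      * u (z + τ * c * s)

/-- `U⁺(x) = min{C₀, e^{−μx}}`. -/
noncomputable def Uplus (μ C₀ : ℝ) (x : ℝ) : ℝ := min C₀ (Real.exp (-μ * x))

/-- `U⁻(x) = max{0, e^{−μx} − d e^{−μ̃x}}`. -/
noncomputable def Uminus (μ μt d : ℝ) (x : ℝ) : ℝ :=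
  max 0 (Real.exp (-μ * x) - d * Real.exp (-μt * x))

/-- `u ∈ ℰ_{τ,μ}(C₀)` (built from `μ̃` and `d`): bounded uniformly continuous with
`U⁻ ≤ u ≤ U⁺`. -/
def memE (μ C₀ μt d : ℝ) (u : ℝ → ℝ) : Prop :=
  UniformContinuous u ∧ ∀ x, Uminus μ μt d x ≤ u x ∧ u x ≤ Uplus μ C₀ x


lemma integrable_abs_mul_gauss {b : ℝ} (hb : 0 < b) :
    Integrable (fun v : ℝ => |v| * Real.exp (-b * v^2)) := by
  have := (integrable_mul_exp_neg_mul_sq hb).abs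
  refine this.congr (Eventually.of_forall fun v => ?_)
  simp [abs_mul, abs_of_pos (Real.exp_pos _)]

lemma integral_abs_mul_gauss {b : ℝ} (hb : 0 < b) :
    ∫ v : ℝ, |v| * Real.exp (-b * v^2) = 1 / b := by
  have h1 : ∫ v : ℝ, |v| * Real.exp (-b * v^2)
      = 2 * ∫ v in Ioi (0:ℝ), v * Real.exp (-b * v^2) := by
    rw [← integral_comp_abs (f := fun v => v * Real.exp (-b * v^2))]
    congr 1 with v
    rw [sq_abs]
  have h2 : ∫ v in Ioi (0:ℝ), v * Real.exp (-b * v^2) = 1 / (2*b) := by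
    have hd : ∀ x ∈ Ici (0:ℝ), HasDerivAt (fun x => -(1/(2*b)) * Real.exp (-b * x^2))
        (x * Real.exp (-b * x^2)) x := by
      intro x _
      have h : HasDerivAt (fun x : ℝ => -b * x^2) (-b * (2*x)) x := by
        simpa using ((hasDerivAt_pow 2 x).const_mul (-b))
      have := (h.exp).const_mul (-(1/(2*b)))
      refine this.congr_deriv ?_
      rw [show -(1/(2*b)) * (Real.exp (-b * x^2) * (-b * (2*x))) = x * Real.exp (-b * x^2) * (b / b) by ring, div_self hb.ne', mul_one]
    have hint : IntegrableOn (fun x : ℝ => x * Real.exp (-b * x^2)) (Ioi 0) :=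
      (integrable_mul_exp_neg_mul_sq hb).integrableOn
    have htend : Tendsto (fun x => -(1/(2*b)) * Real.exp (-b * x^2)) atTop (𝓝 0) := by
      have : Tendsto (fun x : ℝ => -b * x^2) atTop atBot := by
        apply Tendsto.const_mul_atTop_of_neg (by linarith : -b < 0)
        exact tendsto_pow_atTop (by norm_num)
      simpa using ((Real.tendsto_exp_atBot.comp this).const_mul (-(1/(2*b))))
    have := integral_Ioi_of_hasDerivAt_of_tendsto' hd hint htend
    rw [this]
    norm_num
  rw [h1, h2]
  field_simp

lemma integrable_gauss_shift {b : ℝ} (hb : 0 < b) (c : ℝ) :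
    Integrable (fun v : ℝ => Real.exp (-b * (v - c)^2)) :=
  (integrable_exp_neg_mul_sq hb).comp_sub_right c

lemma integral_gauss_shift {b : ℝ} (hb : 0 < b) (c : ℝ) :
    ∫ v : ℝ, Real.exp (-b * (v - c)^2) = Real.sqrt (π / b) := by
  rw [integral_sub_right_eq_self (fun v => Real.exp (-b * v^2)) c]
  exact integral_gaussian b

lemma key_moment {s μ : ℝ} (hs : 0 < s) (hμ : 0 ≤ μ) :
    ∫ w : ℝ, |w| * Real.exp (-(1/(4*s)) * w^2 - μ * w)
      ≤ Real.exp (μ^2*s) * (4*s + 2*μ*s*Real.sqrt (4*π*s)) := by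
  have hb : 0 < 1/(4*s) := by positivity
  have hpt : ∀ w : ℝ, |w| * Real.exp (-(1/(4*s)) * w^2 - μ * w)
      = Real.exp (μ^2*s) * (|w| * Real.exp (-(1/(4*s)) * (w + 2*μ*s)^2)) := by
    intro w
    rw [← mul_assoc, mul_comm (Real.exp _) |w|, mul_assoc, ← Real.exp_add]
    congr 2
    field_simp
    ring
  simp_rw [hpt]
  rw [integral_const_mul]
  have hshift : ∫ w : ℝ, |w| * Real.exp (-(1/(4*s)) * (w + 2*μ*s)^2)
      = ∫ v : ℝ, |v - 2*μ*s| * Real.exp (-(1/(4*s)) * v^2) := by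
    rw [← integral_add_right_eq_self (fun v => |v - 2*μ*s| * Real.exp (-(1/(4*s)) * v^2)) (2*μ*s)]
    simp
  rw [hshift]
  have hRint : Integrable (fun v : ℝ => (|v| + 2*μ*s) * Real.exp (-(1/(4*s)) * v^2)) := by
    simp_rw [add_mul]
    exact (integrable_abs_mul_gauss hb).add ((integrable_exp_neg_mul_sq hb).const_mul _)
  have hLint : Integrable (fun v : ℝ => |v - 2*μ*s| * Real.exp (-(1/(4*s)) * v^2)) := by
    refine hRint.mono' ?_ (Eventually.of_forall fun v => ?_)
    · exact ((continuous_abs.comp (continuous_id.sub continuous_const)).mul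
        (Real.continuous_exp.comp (by continuity))).aestronglyMeasurable
    · have h1 : |v - 2*μ*s| ≤ |v| + 2*μ*s := by
        calc |v - 2*μ*s| ≤ |v| + |2*μ*s| := abs_sub _ _
        _ = |v| + 2*μ*s := by rw [abs_of_nonneg (by nlinarith : (0:ℝ) ≤ 2*μ*s)]
      have h2 : (0:ℝ) < Real.exp (-(1/(4*s)) * v^2) := Real.exp_pos _
      rw [Real.norm_eq_abs, abs_of_nonneg (mul_nonneg (abs_nonneg _) (Real.exp_pos _).le)]
      exact mul_le_mul_of_nonneg_right h1 h2.le
  have hmono : ∫ v : ℝ, |v - 2*μ*s| * Real.exp (-(1/(4*s)) * v^2)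
      ≤ ∫ v : ℝ, (|v| + 2*μ*s) * Real.exp (-(1/(4*s)) * v^2) := by
    refine integral_mono hLint hRint fun v => ?_
    have h1 : |v - 2*μ*s| ≤ |v| + 2*μ*s := by
      calc |v - 2*μ*s| ≤ |v| + |2*μ*s| := abs_sub _ _
      _ = |v| + 2*μ*s := by rw [abs_of_nonneg (by nlinarith : (0:ℝ) ≤ 2*μ*s)]
    exact mul_le_mul_of_nonneg_right h1 (Real.exp_pos _).le
  have hval : ∫ v : ℝ, (|v| + 2*μ*s) * Real.exp (-(1/(4*s)) * v^2)
      = 4*s + 2*μ*s*Real.sqrt (4*π*s) := by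
    simp_rw [add_mul]
    rw [integral_add (integrable_abs_mul_gauss hb) ((integrable_exp_neg_mul_sq hb).const_mul _),
      integral_abs_mul_gauss hb, integral_const_mul, integral_gaussian]
    have : π / (1/(4*s)) = 4*π*s := by field_simp
    rw [this]
    field_simp
  calc Real.exp (μ^2*s) * ∫ v : ℝ, |v - 2*μ*s| * Real.exp (-(1/(4*s)) * v^2)
      ≤ Real.exp (μ^2*s) * ∫ v : ℝ, (|v| + 2*μ*s) * Real.exp (-(1/(4*s)) * v^2) :=
        mul_le_mul_of_nonneg_left hmono (Real.exp_pos _).le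
    _ = _ := by rw [hval]

noncomputable def kerG (s x z : ℝ) : ℝ :=
  Real.exp (-s) / Real.sqrt (4 * π * s) * Real.exp (-(x - z)^2 / (4*s))

lemma kerG_nonneg (s x z : ℝ) : 0 ≤ kerG s x z := by
  unfold kerG; positivity

lemma ker_eq (s x z : ℝ) :
    kerG s x z = Real.exp (-s) / Real.sqrt (4 * π * s)
      * Real.exp (-(1/(4*s)) * (z - x)^2) := by
  unfold kerG; congr 2; ring

lemma integrable_g {s μ : ℝ} (hs : 0 < s) (hμ : 0 ≤ μ) :
    Integrable (fun w : ℝ => |w| * Real.exp (-(1/(4*s)) * w^2 - μ * w)) := by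
  have hb : 0 < 1/(4*s) := by positivity
  have hmaj : Integrable (fun w : ℝ =>
      Real.exp (μ^2*s) * ((|w + 2*μ*s| + 2*μ*s) * Real.exp (-(1/(4*s)) * (w + 2*μ*s)^2))) := by
    have : Integrable (fun v : ℝ => (|v| + 2*μ*s) * Real.exp (-(1/(4*s)) * v^2)) := by
      simp_rw [add_mul]
      exact (integrable_abs_mul_gauss hb).add ((integrable_exp_neg_mul_sq hb).const_mul _)
    exact ((this.comp_add_right (2*μ*s)).const_mul _)
  refine hmaj.mono' ?_ (Eventually.of_forall fun w => ?_)
  · exact ((continuous_abs.mul (Real.continuous_exp.comp (by continuity)))).aestronglyMeasurable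
  · have hpt : |w| * Real.exp (-(1/(4*s)) * w^2 - μ * w)
        = Real.exp (μ^2*s) * (|w| * Real.exp (-(1/(4*s)) * (w + 2*μ*s)^2)) := by
      rw [← mul_assoc, mul_comm (Real.exp _) |w|, mul_assoc, ← Real.exp_add]
      congr 2
      field_simp
      ring
    rw [Real.norm_eq_abs, abs_of_nonneg (mul_nonneg (abs_nonneg _) (Real.exp_pos _).le), hpt]
    have h1 : |w| ≤ |w + 2*μ*s| + 2*μ*s := by
      have := abs_sub (w + 2*μ*s) (2*μ*s)
      simp only [add_sub_cancel_right] at this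
      calc |w| ≤ |w + 2*μ*s| + |2*μ*s| := this
        _ = |w + 2*μ*s| + 2*μ*s := by rw [abs_of_nonneg (by nlinarith : (0:ℝ) ≤ 2*μ*s)]
    exact mul_le_mul_of_nonneg_left
      (mul_le_mul_of_nonneg_right h1 (Real.exp_pos _).le) (Real.exp_pos _).le

lemma integrable_ker_mul {s x : ℝ} (hs : 0 < s) {g : ℝ → ℝ} (hg : Continuous g)
    {C : ℝ} (hgb : ∀ y, |g y| ≤ C) :
    Integrable (fun z : ℝ => kerG s x z * g z) := by
  have hb : 0 < 1/(4*s) := by positivity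
  simp_rw [ker_eq, mul_assoc]
  apply Integrable.const_mul
  have hint : Integrable (fun z : ℝ => Real.exp (-(1/(4*s)) * (z - x)^2)) :=
    integrable_gauss_shift hb x
  have := hint.bdd_mul (hg.aestronglyMeasurable) (Eventually.of_forall fun z => by
    simpa [Real.norm_eq_abs] using hgb z)
  refine this.congr (Eventually.of_forall fun z => ?_)
  ring

lemma hasDerivAt_inner {s β x₀ : ℝ} (hs : 0 < s) {u : ℝ → ℝ} (hu : Continuous u)
    {C : ℝ} (hub : ∀ y, |u y| ≤ C) :
    HasDerivAt (fun x => ∫ z : ℝ, kerG s x z * u (z + β*s))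
      (∫ z : ℝ, (z - x₀)/(2*s) * (kerG s x₀ z * u (z + β*s))) x₀ := by
  have hb8 : 0 < 1/(8*s) := by positivity
  have hC0 : 0 ≤ C := le_trans (abs_nonneg _) (hub 0)
  have hcontu : Continuous fun z : ℝ => u (z + β*s) := hu.comp (by continuity)
  have hcker : ∀ x : ℝ, Continuous fun z : ℝ => kerG s x z * u (z + β*s) := by
    intro x
    unfold kerG
    exact (continuous_const.mul (Real.continuous_exp.comp (by continuity))).mul hcontu
  set bound : ℝ → ℝ := fun z =>
    C * (Real.exp (-s) / Real.sqrt (4*π*s)) / (2*s) * Real.exp (1/(4*s))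
      * ((|z - x₀| + 1) * Real.exp (-(1/(8*s)) * (z - x₀)^2)) with hbound_def
  have h := hasDerivAt_integral_of_dominated_loc_of_deriv_le (μ := volume)
    (F := fun x z => kerG s x z * u (z + β*s))
    (F' := fun x z => (z - x)/(2*s) * (kerG s x z * u (z + β*s)))
    (x₀ := x₀) (bound := bound) (s := Metric.ball x₀ 1) (Metric.ball_mem_nhds x₀ one_pos)
    (Eventually.of_forall fun x => (hcker x).aestronglyMeasurable)
    (integrable_ker_mul hs hcontu (fun y => hub (y + β*s)))
    ((((continuous_id.sub continuous_const).div_const (2*s)).mul (hcker x₀)).aestronglyMeasurable)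
    (Eventually.of_forall fun z => ?_) ?_ (Eventually.of_forall fun z => ?_)
  · exact h.2
  · -- h_bound
    intro x hx
    rw [Metric.mem_ball, Real.dist_eq] at hx
    have hx2 : (x - x₀)^2 ≤ 1 := by nlinarith [(abs_lt.mp hx).1, (abs_lt.mp hx).2]
    have hker_le : kerG s x z ≤ (Real.exp (-s) / Real.sqrt (4*π*s))
        * (Real.exp (1/(4*s)) * Real.exp (-(1/(8*s)) * (z - x₀)^2)) := by
      rw [ker_eq]
      refine mul_le_mul_of_nonneg_left ?_ (by positivity)
      rw [← Real.exp_add]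
      apply Real.exp_le_exp.mpr
      have key : (z - x₀)^2 ≤ 2*(z - x)^2 + 2 := by nlinarith [sq_nonneg ((z-x) - (x-x₀))]
      have hid : (1/(8*s))*(2*(z - x)^2+2) = (1/(4*s))*(z - x)^2 + 1/(4*s) := by
        field_simp
        ring
      have hb8' := hb8.le
      have := mul_le_mul_of_nonneg_left key hb8'
      linarith [this, hid.le, hid.ge]
    have hdist : |z - x| ≤ |z - x₀| + 1 := by
      have h := abs_sub (z - x₀) (x - x₀)
      have he : (z - x₀) - (x - x₀) = z - x := by ring
      rw [he] at h
      have h2 : |x - x₀| ≤ 1 := hx.le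
      linarith
    calc ‖(z - x)/(2*s) * (kerG s x z * u (z + β*s))‖
        = |z - x|/(2*s) * (kerG s x z * |u (z + β*s)|) := by
          rw [Real.norm_eq_abs, abs_mul, abs_mul, abs_div,
            abs_of_pos (by positivity : (0:ℝ) < 2*s), abs_of_nonneg (kerG_nonneg s x z)]
      _ ≤ (|z - x₀| + 1)/(2*s) * (((Real.exp (-s) / Real.sqrt (4*π*s))
            * (Real.exp (1/(4*s)) * Real.exp (-(1/(8*s)) * (z - x₀)^2))) * C) := by
          gcongr <;>
            first
              | exact hdist
              | exact hker_le
              | exact hub _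
              | positivity
              | exact mul_nonneg (kerG_nonneg s x z) (abs_nonneg _)
              | exact kerG_nonneg s x z
      _ = bound z := by rw [hbound_def]; ring
  · -- bound integrable
    apply Integrable.const_mul
    simp_rw [add_mul, one_mul]
    exact ((integrable_abs_mul_gauss hb8).comp_sub_right x₀).add (integrable_gauss_shift hb8 x₀)
  · -- h_diff
    intro x _
    have h1 : HasDerivAt (fun x : ℝ => (x - z)^2) (2*(x-z)) x := by
      simpa using HasDerivAt.comp_sub_const x z (hasDerivAt_pow 2 (x - z))
    have h2 : HasDerivAt (fun x : ℝ => -(x - z)^2/(4*s)) ((z-x)/(2*s)) x := by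
      have := (h1.neg).div_const (4*s)
      refine this.congr_deriv ?_
      rw [div_eq_div_iff (by positivity) (by positivity)]
      ring
    have h3 := ((h2.exp.const_mul (Real.exp (-s) / Real.sqrt (4*π*s))).mul_const (u (z + β*s)))
    refine h3.congr_deriv ?_
    unfold kerG
    ring

lemma sqrt_four_pi_s {s : ℝ} (hs : 0 < s) :
    Real.sqrt (4*π*s) = 2 * Real.sqrt (π*s) := by
  rw [show 4*π*s = 2^2*(π*s) by ring, Real.sqrt_mul (by positivity), Real.sqrt_sq (by norm_num)]

lemma innerDer_bound {s β μ x : ℝ} (hs : 0 < s) (hμ : 0 < μ) {u : ℝ → ℝ}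
    (hu0 : ∀ y, 0 ≤ u y) (huμ : ∀ y, u y ≤ Real.exp (-μ*y)) :
    |∫ z : ℝ, (z - x)/(2*s) * (kerG s x z * u (z + β*s))|
      ≤ Real.exp (-μ*x) * Real.exp (-(1+μ*β-μ^2)*s) * (1/Real.sqrt (π*s) + μ) := by
  have hP : 0 < Real.sqrt (π*s) := Real.sqrt_pos.mpr (by positivity)
  set A : ℝ := Real.exp (-s) / Real.sqrt (4*π*s) with hA
  have hA0 : 0 < A := by rw [hA]; positivity
  set c : ℝ := A/(2*s) * Real.exp (-μ*β*s) * Real.exp (-μ*x) with hc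
  have hc0 : 0 < c := by rw [hc]; positivity
  set g : ℝ → ℝ := fun w => |w| * Real.exp (-(1/(4*s)) * w^2 - μ * w) with hg
  set h : ℝ → ℝ := fun z => c * g (z - x) with hh
  have hint : Integrable h := ((integrable_g hs hμ.le).comp_sub_right x).const_mul c
  have hform : ∀ z : ℝ, h z = |z - x|/(2*s) * (kerG s x z * Real.exp (-μ*(z+β*s))) := by
    intro z
    have e1 : Real.exp (-μ*β*s) * Real.exp (-μ*x)
          * Real.exp (-(1/(4*s))*(z-x)^2 - μ*(z-x))
        = Real.exp (-(1/(4*s))*(z-x)^2) * Real.exp (-μ*(z+β*s)) := by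
      rw [← Real.exp_add, ← Real.exp_add, ← Real.exp_add]
      congr 1
      ring
    calc h z = (A/(2*s)) * |z - x| * (Real.exp (-μ*β*s) * Real.exp (-μ*x)
          * Real.exp (-(1/(4*s))*(z-x)^2 - μ*(z-x))) := by rw [hh, hc, hg]; ring
      _ = (A/(2*s)) * |z - x| * (Real.exp (-(1/(4*s))*(z-x)^2) * Real.exp (-μ*(z+β*s))) := by
          rw [e1]
      _ = |z - x|/(2*s) * (kerG s x z * Real.exp (-μ*(z+β*s))) := by rw [ker_eq]; ring
  have hpt : ∀ z : ℝ, ‖(z - x)/(2*s) * (kerG s x z * u (z + β*s))‖ ≤ h z := by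
    intro z
    rw [hform z, Real.norm_eq_abs, abs_mul, abs_mul, abs_div,
      abs_of_pos (by positivity : (0:ℝ) < 2*s), abs_of_nonneg (kerG_nonneg s x z),
      abs_of_nonneg (hu0 _)]
    gcongr
    · exact kerG_nonneg s x z
    · exact huμ _
  have hmain := norm_integral_le_of_norm_le hint (Eventually.of_forall hpt)
  refine hmain.trans ?_
  have hval : ∫ z : ℝ, h z = c * ∫ w : ℝ, g w := by
    rw [hh, integral_const_mul, integral_sub_right_eq_self g x]
  rw [hval]
  have hkm := key_moment hs hμ.le
  have h2 : c * ∫ w : ℝ, g w ≤ c * (Real.exp (μ^2*s) * (4*s + 2*μ*s*Real.sqrt (4*π*s))) := by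
    apply mul_le_mul_of_nonneg_left _ hc0.le
    exact hkm
  refine h2.trans ?_
  rw [hc, hA, sqrt_four_pi_s hs]
  have hexp : Real.exp (-s) * Real.exp (-μ*β*s) * Real.exp (-μ*x) * Real.exp (μ^2*s)
      = Real.exp (-μ*x) * Real.exp (-(1+μ*β-μ^2)*s) := by
    rw [← Real.exp_add, ← Real.exp_add, ← Real.exp_add, ← Real.exp_add]
    congr 1
    ring
  have : Real.exp (-s) / (2*Real.sqrt (π*s)) / (2*s) * Real.exp (-μ*β*s) * Real.exp (-μ*x)
        * (Real.exp (μ^2*s) * (4*s + 2*μ*s*(2*Real.sqrt (π*s))))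
      = (Real.exp (-s) * Real.exp (-μ*β*s) * Real.exp (-μ*x) * Real.exp (μ^2*s))
        * (1/Real.sqrt (π*s) + μ) := by
    field_simp
    ring
  rw [this, hexp]

lemma integrableOn_rpow_exp_neg_mul {a r : ℝ} (ha : 0 < a) (hr : 0 < r) :
    IntegrableOn (fun t : ℝ => t ^ (a-1) * Real.exp (-(r*t))) (Ioi 0) := by
  have h0 := Real.GammaIntegral_convergent ha
  have h1 : IntegrableOn (fun t : ℝ => Real.exp (-(r*t)) * (r*t)^(a-1)) (Ioi 0) := by
    have := (integrableOn_Ioi_comp_mul_left_iff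
      (fun x : ℝ => Real.exp (-x) * x ^ (a-1)) 0 hr).mpr (by simpa using h0)
    simpa using this
  refine (h1.const_mul (r^(1-a))).congr ?_
  rw [EventuallyEq, ae_restrict_iff' measurableSet_Ioi]
  refine Eventually.of_forall fun t (ht : 0 < t) => ?_
  rw [Real.mul_rpow hr.le ht.le]
  have hrr : r ^ (1-a) * r ^ (a-1) = 1 := by
    rw [← Real.rpow_add hr]
    norm_num
  calc r^(1-a) * (Real.exp (-(r*t)) * (r^(a-1) * t^(a-1)))
      = (r^(1-a)*r^(a-1)) * (Real.exp (-(r*t)) * t^(a-1)) := by ring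
    _ = t^(a-1) * Real.exp (-(r*t)) := by rw [hrr]; ring

lemma integral_rpow_half_exp {r : ℝ} (hr : 0 < r) :
    ∫ t in Ioi (0:ℝ), t ^ ((1:ℝ)/2 - 1) * Real.exp (-(r*t))
      = (1/r) ^ ((1:ℝ)/2) * Real.sqrt π := by
  rw [Real.integral_rpow_mul_exp_neg_mul_Ioi (by norm_num : (0:ℝ) < 1/2) hr,
    Real.Gamma_one_half_eq]

lemma integral_exp_neg_mul_Ioi' {r : ℝ} (hr : 0 < r) :
    ∫ t in Ioi (0:ℝ), Real.exp (-(r*t)) = 1/r := by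
  have := Real.integral_rpow_mul_exp_neg_mul_Ioi (by norm_num : (0:ℝ) < 1) hr
  simp only [sub_self, Real.rpow_zero, one_mul, Real.rpow_one, Real.Gamma_one, mul_one] at this
  simpa using this

lemma integrableOn_exp_neg_mul_Ioi' {r : ℝ} (hr : 0 < r) :
    IntegrableOn (fun t : ℝ => Real.exp (-(r*t))) (Ioi 0) := by
  have := exp_neg_integrableOn_Ioi 0 hr
  simpa [neg_mul] using this

lemma bf_eq {Λ μ : ℝ} {s : ℝ} (hs : 0 < s) :
    Real.exp (-(Λ*s)) * (1/Real.sqrt (π*s) + μ)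
      = (1/Real.sqrt π) * (s ^ ((1:ℝ)/2 - 1) * Real.exp (-(Λ*s))) + μ * Real.exp (-(Λ*s)) := by
  have h1 : s ^ ((1:ℝ)/2 - 1) = (Real.sqrt s)⁻¹ := by
    rw [show (1:ℝ)/2 - 1 = -(1/2) by norm_num, Real.rpow_neg hs.le, Real.sqrt_eq_rpow]
  rw [h1, Real.sqrt_mul Real.pi_pos.le]
  field_simp

lemma bf_integrableOn {Λ μ : ℝ} (hΛ : 0 < Λ) :
    IntegrableOn (fun s : ℝ => Real.exp (-(Λ*s)) * (1/Real.sqrt (π*s) + μ)) (Ioi 0) := by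
  have h1 := (integrableOn_rpow_exp_neg_mul (by norm_num : (0:ℝ) < 1/2) hΛ).const_mul
    (1/Real.sqrt π)
  have h2 := (integrableOn_exp_neg_mul_Ioi' hΛ).const_mul μ
  refine (h1.add h2).congr ?_
  rw [EventuallyEq, ae_restrict_iff' measurableSet_Ioi]
  exact Eventually.of_forall fun s hs => (bf_eq hs).symm

lemma bf_integral {Λ μ : ℝ} (hΛ : 0 < Λ) :
    ∫ s in Ioi (0:ℝ), Real.exp (-(Λ*s)) * (1/Real.sqrt (π*s) + μ)
      = 1/Real.sqrt Λ + μ/Λ := by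
  rw [setIntegral_congr_fun measurableSet_Ioi (fun s (hs : 0 < s) => bf_eq hs)]
  rw [integral_add ((integrableOn_rpow_exp_neg_mul (by norm_num : (0:ℝ) < 1/2) hΛ).const_mul _)
    ((integrableOn_exp_neg_mul_Ioi' hΛ).const_mul _), integral_const_mul, integral_const_mul,
    integral_rpow_half_exp hΛ, integral_exp_neg_mul_Ioi' hΛ]
  have hπ : 0 < Real.sqrt π := Real.sqrt_pos.mpr Real.pi_pos
  have h1 : (1/Λ) ^ ((1:ℝ)/2) = 1/Real.sqrt Λ := by
    rw [← Real.sqrt_eq_rpow, one_div, Real.sqrt_inv, one_div]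
  rw [h1]
  field_simp

lemma integrable_kerG {s : ℝ} (hs : 0 < s) (x : ℝ) :
    Integrable (fun z : ℝ => kerG s x z) := by
  have hb : 0 < 1/(4*s) := by positivity
  simp_rw [ker_eq]
  exact (integrable_gauss_shift hb x).const_mul _

lemma integral_kerG {s : ℝ} (hs : 0 < s) (x : ℝ) :
    ∫ z : ℝ, kerG s x z = Real.exp (-s) := by
  have hb : 0 < 1/(4*s) := by positivity
  simp_rw [ker_eq]
  rw [integral_const_mul, integral_gauss_shift hb x]
  have h4 : π / (1/(4*s)) = 4*π*s := by field_simp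
  rw [h4, div_mul_cancel₀]
  exact (Real.sqrt_pos.mpr (by positivity)).ne'

lemma meas_inner {β x : ℝ} {u : ℝ → ℝ} (hu : Continuous u) :
    StronglyMeasurable (fun s : ℝ => ∫ z : ℝ, kerG s x z * u (z + β*s)) := by
  have m1 : Measurable fun p : ℝ × ℝ => Real.exp (-p.1) / Real.sqrt (4*π*p.1) :=
    (Real.measurable_exp.comp measurable_fst.neg).div
      (Real.continuous_sqrt.measurable.comp (measurable_const.mul measurable_fst))
  have m2 : Measurable fun p : ℝ × ℝ => Real.exp (-(x - p.2)^2/(4*p.1)) :=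
    Real.measurable_exp.comp ((((measurable_const.sub measurable_snd).pow_const 2).neg).div
      (measurable_const.mul measurable_fst))
  have m3 : Measurable fun p : ℝ × ℝ => u (p.2 + β*p.1) :=
    hu.measurable.comp (measurable_snd.add (measurable_const.mul measurable_fst))
  have : StronglyMeasurable fun p : ℝ × ℝ => kerG p.1 x p.2 * u (p.2 + β*p.1) := by
    unfold kerG
    exact ((m1.mul m2).mul m3).stronglyMeasurable
  exact this.integral_prod_right'

lemma meas_innerD {β x : ℝ} (x₀ : ℝ) {u : ℝ → ℝ} (hu : Continuous u) :
    StronglyMeasurable (fun s : ℝ =>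
      ∫ z : ℝ, (z - x₀)/(2*s) * (kerG s x z * u (z + β*s))) := by
  have m1 : Measurable fun p : ℝ × ℝ => Real.exp (-p.1) / Real.sqrt (4*π*p.1) :=
    (Real.measurable_exp.comp measurable_fst.neg).div
      (Real.continuous_sqrt.measurable.comp (measurable_const.mul measurable_fst))
  have m2 : Measurable fun p : ℝ × ℝ => Real.exp (-(x - p.2)^2/(4*p.1)) :=
    Real.measurable_exp.comp ((((measurable_const.sub measurable_snd).pow_const 2).neg).div
      (measurable_const.mul measurable_fst))
  have m3 : Measurable fun p : ℝ × ℝ => u (p.2 + β*p.1) :=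
    hu.measurable.comp (measurable_snd.add (measurable_const.mul measurable_fst))
  have m0 : Measurable fun p : ℝ × ℝ => (p.2 - x₀)/(2*p.1) :=
    (measurable_snd.sub measurable_const).div (measurable_const.mul measurable_fst)
  have : StronglyMeasurable fun p : ℝ × ℝ =>
      (p.2 - x₀)/(2*p.1) * (kerG p.1 x p.2 * u (p.2 + β*p.1)) := by
    unfold kerG
    exact (m0.mul ((m1.mul m2).mul m3)).stronglyMeasurable
  exact this.integral_prod_right'

lemma hasDerivAt_outer {β μ C₀ x₀ : ℝ} {u : ℝ → ℝ} (hμ0 : 0 < μ)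
    (hΛ : 0 < 1 + μ*β - μ^2) (hC₀ : 0 < C₀) (hu : Continuous u)
    (hu0 : ∀ y, 0 ≤ u y) (huC : ∀ y, u y ≤ C₀) (huμ : ∀ y, u y ≤ Real.exp (-μ*y)) :
    HasDerivAt (fun x => ∫ s in Ioi (0:ℝ), ∫ z : ℝ, kerG s x z * u (z + β*s))
      (∫ s in Ioi (0:ℝ), ∫ z : ℝ, (z - x₀)/(2*s) * (kerG s x₀ z * u (z + β*s))) x₀ := by
  set Λ : ℝ := 1 + μ*β - μ^2 with hΛdef
  have hub : ∀ y, |u y| ≤ C₀ := fun y => abs_le.mpr ⟨by linarith [hu0 y], huC y⟩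
  have h := hasDerivAt_integral_of_dominated_loc_of_deriv_le
    (μ := volume.restrict (Ioi (0:ℝ)))
    (F := fun x s => ∫ z : ℝ, kerG s x z * u (z + β*s))
    (F' := fun x s => ∫ z : ℝ, (z - x)/(2*s) * (kerG s x z * u (z + β*s)))
    (x₀ := x₀)
    (bound := fun s => (Real.exp μ * Real.exp (-μ*x₀))
      * (Real.exp (-(Λ*s)) * (1/Real.sqrt (π*s) + μ)))
    (s := Metric.ball x₀ 1) (Metric.ball_mem_nhds x₀ one_pos)
    (Eventually.of_forall fun x => (meas_inner hu).aestronglyMeasurable)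
    ?_ ((meas_innerD x₀ hu).aestronglyMeasurable) ?_ ?_ ?_
  · exact h.2
  · -- integrability of F x₀
    refine Integrable.mono' ((integrableOn_exp_neg_mul_Ioi'
      (by norm_num : (0:ℝ) < 1)).const_mul C₀) ((meas_inner hu).aestronglyMeasurable) ?_
    rw [ae_restrict_iff' measurableSet_Ioi]
    refine Eventually.of_forall fun s hs => ?_
    have hs' : 0 < s := hs
    have h1 : ‖∫ z : ℝ, kerG s x₀ z * u (z + β*s)‖ ≤ ∫ z : ℝ, kerG s x₀ z * C₀ := by
      refine norm_integral_le_of_norm_le ((integrable_kerG hs' x₀).mul_const C₀)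
        (Eventually.of_forall fun z => ?_)
      rw [Real.norm_eq_abs, abs_mul, abs_of_nonneg (kerG_nonneg s x₀ z)]
      exact mul_le_mul_of_nonneg_left (hub _) (kerG_nonneg s x₀ z)
    rw [integral_mul_const, integral_kerG hs' x₀] at h1
    refine h1.trans ?_
    rw [one_mul, mul_comm]
  · -- h_bound
    rw [ae_restrict_iff' measurableSet_Ioi]
    refine Eventually.of_forall fun s hs => fun x hx => ?_
    have hs' : (0:ℝ) < s := hs
    rw [Metric.mem_ball, Real.dist_eq] at hx
    have h1 := innerDer_bound (β := β) (x := x) hs' hμ0 hu0 huμ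
    rw [Real.norm_eq_abs]
    refine h1.trans ?_
    have h2 : Real.exp (-μ*x) ≤ Real.exp μ * Real.exp (-μ*x₀) := by
      rw [← Real.exp_add]
      apply Real.exp_le_exp.mpr
      have := (abs_lt.mp hx).1
      nlinarith
    have h3 : Real.exp (-(1+μ*β-μ^2)*s) = Real.exp (-(Λ*s)) := by rw [hΛdef, neg_mul]
    rw [mul_assoc, h3]
    exact mul_le_mul_of_nonneg_right h2 (by positivity)
  · -- bound integrable
    exact (bf_integrableOn (μ := μ) hΛ).const_mul _
  · -- h_diff
    rw [ae_restrict_iff' measurableSet_Ioi]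
    exact Eventually.of_forall fun s hs => fun x _ => hasDerivAt_inner hs hu hub

/-- Lemma 3.3: for `u ∈ ℰ_{τ,μ}(C₀)`, `V(·;u)` is differentiable and
`|V'(x;u)| ≤ (1/√(1+τμc_μ−μ²) + μ/(1+τμc_μ−μ²)) e^{−μx}`. -/
theorem Vfun_deriv_bound (a b τ μ : ℝ) (ha : 0 < a) (hb : 0 < b) (hτ : 0 < τ)
    (hμ0 : 0 < μ) (hμ : μ < muTau a τ)
    (C₀ : ℝ) (hC₀ : 0 < C₀)
    (μt d : ℝ) (hμt₁ : μ < μt) (hμt₂ : μt < min (2 * μ) (muTau a τ))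
    (hd : max 1 (C₀ ^ ((μ - μt) / μ)) < d)
    (u : ℝ → ℝ) (hu : memE μ C₀ μt d u) :
    ∀ x : ℝ, DifferentiableAt ℝ (Vfun τ (cmu a μ) u) x ∧
      |deriv (Vfun τ (cmu a μ) u) x|
        ≤ (1 / Real.sqrt (1 + τ * μ * cmu a μ - μ ^ 2)
            + μ / (1 + τ * μ * cmu a μ - μ ^ 2)) * Real.exp (-μ * x) := by
  obtain ⟨huc, hbounds⟩ := hu
  have hcont : Continuous u := huc.continuous
  have hu0 : ∀ y, 0 ≤ u y := fun y => le_trans (le_max_left _ _) (hbounds y).1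
  have huC : ∀ y, u y ≤ C₀ := fun y => le_trans (hbounds y).2 (min_le_left _ _)
  have huμ : ∀ y, u y ≤ Real.exp (-μ * y) := fun y => le_trans (hbounds y).2 (min_le_right _ _)
  set Λ : ℝ := 1 + τ * μ * cmu a μ - μ ^ 2 with hΛdef
  have hμc : τ * μ * cmu a μ = τ * (μ^2 + a) := by
    unfold cmu
    field_simp
  have hΛ : 0 < Λ := by
    rw [hΛdef, hμc]
    by_cases h1τ : 1 ≤ τ
    · nlinarith [mul_nonneg (sub_nonneg.mpr h1τ) (sq_nonneg μ), mul_pos hτ ha]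
    · push_neg at h1τ
      rw [muTau, if_neg (not_le.mpr h1τ)] at hμ
      have h2 := lt_of_lt_of_le hμ (min_le_right _ _)
      have h3 : μ^2 < (1 + τ*a)/(1-τ) := (Real.lt_sqrt hμ0.le).mp h2
      have h4 : μ^2 * (1-τ) < 1 + τ*a := (lt_div_iff₀ (by linarith)).mp h3
      nlinarith
  intro x
  have hΛ' : 0 < 1 + μ * (τ * cmu a μ) - μ^2 := by
    have : 1 + μ * (τ * cmu a μ) - μ^2 = Λ := by rw [hΛdef]; ring
    rw [this]
    exact hΛ
  have houter := hasDerivAt_outer (β := τ * cmu a μ) (x₀ := x) hμ0 hΛ' hC₀ hcont hu0 huC huμ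
  have hVeq : Vfun τ (cmu a μ) u
      = fun x => ∫ s in Ioi (0:ℝ), ∫ z : ℝ, kerG s x z * u (z + (τ * cmu a μ)*s) := by
    funext y
    unfold Vfun kerG
    norm_num [mul_assoc]
  rw [hVeq]
  refine ⟨houter.differentiableAt, ?_⟩
  rw [houter.deriv]
  have hbd : |∫ s in Ioi (0:ℝ), ∫ z : ℝ, (z - x)/(2*s) * (kerG s x z * u (z + (τ*cmu a μ)*s))|
      ≤ ∫ s in Ioi (0:ℝ), Real.exp (-μ*x) * (Real.exp (-(Λ*s)) * (1/Real.sqrt (π*s) + μ)) := by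
    rw [← Real.norm_eq_abs]
    refine norm_integral_le_of_norm_le (((bf_integrableOn (μ := μ) hΛ).const_mul _)) ?_
    rw [ae_restrict_iff' measurableSet_Ioi]
    refine Eventually.of_forall fun s hs => ?_
    have hs' : (0:ℝ) < s := hs
    have h1 := innerDer_bound (β := τ * cmu a μ) (x := x) hs' hμ0 hu0 huμ
    rw [Real.norm_eq_abs]
    refine h1.trans (le_of_eq ?_)
    rw [mul_assoc]
    congr 2
    rw [hΛdef]
    congr 1
    ring
  rw [integral_const_mul, bf_integral hΛ] at hbd
  exact hbd.trans (le_of_eq (mul_comm _ _))
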